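/- Value gap via occupancy-weighted KL: Let P and P̂ be two transition kernels on the same finite MDP (same reward r with 0 ≤ r ≤ R_max, discount γ ∈ (0,1), initial distribution ρ₀), and suppose for every (s,a), P(s'|s,a) > 0 implies P̂(s'|s,a) > 0. Then for every stationary policy π, |V_π(P) − V_π(P̂)| ≤ (γ·R_max/(1−γ)²) · sqrt( (1/2) · Σ_{(s,a)} d̄_π(s,a)·KL(P(·|s,a) ‖ P̂(·|s,a)) ), where d̄_π is the normalized discounted occupancy of π under P. -/

import Mathlib

open Finset Real

/-- `p` is a probability mass function on a finite type. -/
def IsPMF {X : Type*} [Fintype X] (p : X → ℝ) : Prop :=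
  (∀ x, 0 ≤ p x) ∧ ∑ x, p x = 1

/-- `P` is a transition kernel: each `P s a` is a pmf on states. -/
def IsKernel {S A : Type*} [Fintype S] [Fintype A] (P : S → A → S → ℝ) : Prop :=
  ∀ s a, IsPMF (P s a)

/-- `pol` is a stationary policy: each `pol s` is a pmf on actions. -/
def IsPolicy {S A : Type*} [Fintype S] [Fintype A] (pol : S → A → ℝ) : Prop :=
  ∀ s, IsPMF (pol s)

/-- `V` satisfies the Bellman evaluation equation for policy `pol` under kernel `P`,
reward `r` and discount `γ`. -/
def IsValue {S A : Type*} [Fintype S] [Fintype A] (P : S → A → S → ℝ) (pol : S → A → ℝ)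
    (r : S → A → ℝ) (γ : ℝ) (V : S → ℝ) : Prop :=
  ∀ s, V s = ∑ a, pol s a * (r s a + γ * ∑ s', P s a s' * V s')

/-- `d` is the (unnormalized) discounted state-action occupancy of `pol` under kernel `P`
with initial distribution `ρ₀` and discount `γ`. -/
def IsOcc {S A : Type*} [Fintype S] [Fintype A] (P : S → A → S → ℝ) (pol : S → A → ℝ)
    (ρ₀ : S → ℝ) (γ : ℝ) (d : S → A → ℝ) : Prop :=
  ∀ s a, d s a = pol s a * (ρ₀ s + γ * ∑ x : S × A, d x.1 x.2 * P x.1 x.2 s)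

/-- ℓ₁ distance between two pmfs on a finite type. -/
noncomputable def l1Dist {X : Type*} [Fintype X] (p q : X → ℝ) : ℝ :=
  ∑ x, |p x - q x|

/-- Total variation distance between two pmfs on a finite type. -/
noncomputable def tvDist {X : Type*} [Fintype X] (p q : X → ℝ) : ℝ :=
  (1 / 2) * ∑ x, |p x - q x|

/-- Kullback-Leibler divergence between two pmfs on a finite type (finite under
absolute continuity). -/
noncomputable def klF {X : Type*} [Fintype X] (p q : X → ℝ) : ℝ :=
  ∑ x, p x * Real.log (p x / q x)

/-- `d_data` satisfies κ-coverage for the policy set `Pol` under kernel `P`: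
every occupancy of a policy in `Pol` is dominated by `κ · d_data`. -/
def KappaCoverage {S A : Type*} [Fintype S] [Fintype A] (P : S → A → S → ℝ) (ρ₀ : S → ℝ)
    (γ : ℝ) (Pol : Set (S → A → ℝ)) (ddata : S → A → ℝ) (κ : ℝ) : Prop :=
  ∀ pol ∈ Pol, ∀ dpol : S → A → ℝ, IsOcc P pol ρ₀ γ dpol → ∀ s a, dpol s a ≤ κ * ddata s a

/-- Critic discrepancy `Δ_{D,P̂}(s,a)`. -/
noncomputable def critDelta {S A : Type*} [Fintype S] (P Phat : S → A → S → ℝ)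
    (D : S → A → S → ℝ) (s : S) (a : A) : ℝ :=
  (∑ s', P s a s' * D s a s') - ∑ s', Phat s a s' * D s a s'

/-- Supremum over the critic class of the critic discrepancy at `(s,a)`. -/
noncomputable def critSup {S A : Type*} [Fintype S] (𝒟 : Set (S → A → S → ℝ))
    (P Phat : S → A → S → ℝ) (s : S) (a : A) : ℝ :=
  sSup {y | ∃ D ∈ 𝒟, y = critDelta P Phat D s a}

private lemma G_hasDeriv {t : ℝ} (ht : 0 < t) :
    HasDerivAt (fun t : ℝ => (t + 1) * Real.log t - 2 * (t - 1))
      (Real.log t + (t + 1) / t - 2) t := by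
  have h1 : HasDerivAt (fun t : ℝ => (t + 1) * Real.log t)
      (1 * Real.log t + (t + 1) * t⁻¹) t := by
    exact ((hasDerivAt_id t).add_const 1).mul (Real.hasDerivAt_log ht.ne')
  have h2 : HasDerivAt (fun t : ℝ => 2 * (t - 1)) 2 t := by
    simpa using ((hasDerivAt_id t).sub_const 1).const_mul 2
  have := h1.sub h2
  exact this.congr_deriv (by ring)

private lemma G_mono : MonotoneOn (fun t : ℝ => (t + 1) * Real.log t - 2 * (t - 1))
    (Set.Ioi 0) := by
  have hint : interior (Set.Ioi (0:ℝ)) = Set.Ioi 0 := interior_Ioi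
  apply monotoneOn_of_deriv_nonneg (convex_Ioi 0)
  · exact fun t ht => ((G_hasDeriv ht).continuousAt).continuousWithinAt
  · rw [hint]
    exact fun t ht => (G_hasDeriv ht).differentiableAt.differentiableWithinAt
  · rw [hint]
    intro t ht
    rw [(G_hasDeriv ht).deriv]
    have h := Real.one_sub_inv_le_log_of_pos (Set.mem_Ioi.1 ht)
    have ht0 : (0:ℝ) < t := Set.mem_Ioi.1 ht
    have h2 : (t + 1) / t = 1 + t⁻¹ := by field_simp
    rw [h2]
    linarith

private lemma G_nonneg {t : ℝ} (ht : 1 ≤ t) :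
    0 ≤ (t + 1) * Real.log t - 2 * (t - 1) := by
  have := G_mono (Set.mem_Ioi.2 one_pos) (Set.mem_Ioi.2 (lt_of_lt_of_le one_pos ht)) ht
  simpa using this

private lemma G_nonpos {t : ℝ} (ht0 : 0 < t) (ht : t ≤ 1) :
    (t + 1) * Real.log t - 2 * (t - 1) ≤ 0 := by
  have := G_mono (Set.mem_Ioi.2 ht0) (Set.mem_Ioi.2 one_pos) ht
  simpa using this

private lemma F_hasDeriv {t : ℝ} (ht : 0 < t) :
    HasDerivAt (fun t : ℝ => (t + 2) * (t * Real.log t - t + 1) - 3/2 * (t - 1)^2)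
      (2 * ((t + 1) * Real.log t - 2 * (t - 1))) t := by
  have hlog : HasDerivAt (fun t : ℝ => t * Real.log t) (Real.log t + 1) t := by
    have := (hasDerivAt_id t).mul (Real.hasDerivAt_log ht.ne')
    exact this.congr_deriv (by simp [ht.ne'])
  have h1 : HasDerivAt (fun t : ℝ => (t + 2) * (t * Real.log t - t + 1))
      (1 * (t * Real.log t - t + 1) + (t + 2) * (Real.log t + 1 - 1)) t :=
    ((hasDerivAt_id t).add_const 2).mul ((hlog.sub (hasDerivAt_id t)).add_const 1)
  have h2 : HasDerivAt (fun t : ℝ => 3/2 * (t - 1)^2) (3/2 * (2 * (t - 1))) t := by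
    simpa using (((hasDerivAt_id t).sub_const 1).pow 2).const_mul (3/2:ℝ)
  exact (h1.sub h2).congr_deriv (by ring)

private lemma F_nonneg {t : ℝ} (ht : 0 < t) :
    0 ≤ (t + 2) * (t * Real.log t - t + 1) - 3/2 * (t - 1)^2 := by
  set F := fun t : ℝ => (t + 2) * (t * Real.log t - t + 1) - 3/2 * (t - 1)^2 with hF
  have hF1 : F 1 = 0 := by simp [hF]
  rcases le_or_gt 1 t with h1 | h1
  · have hmono : MonotoneOn F (Set.Ici 1) := by
      apply monotoneOn_of_deriv_nonneg (convex_Ici 1)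
      · exact fun x hx => (F_hasDeriv (lt_of_lt_of_le one_pos hx)).continuousAt.continuousWithinAt
      · rw [interior_Ici]
        exact fun x hx => (F_hasDeriv (lt_trans one_pos hx)).differentiableAt.differentiableWithinAt
      · rw [interior_Ici]
        intro x hx
        rw [(F_hasDeriv (lt_trans one_pos (Set.mem_Ioi.1 hx))).deriv]
        have := G_nonneg (le_of_lt (Set.mem_Ioi.1 hx))
        linarith
    have := hmono (Set.mem_Ici.2 le_rfl) (Set.mem_Ici.2 h1) h1
    rw [hF1] at this; exact this
  · have hanti : AntitoneOn F (Set.Ioc 0 1) := by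
      apply antitoneOn_of_deriv_nonpos (convex_Ioc 0 1)
      · exact fun x hx => (F_hasDeriv hx.1).continuousAt.continuousWithinAt
      · rw [interior_Ioc]
        exact fun x hx => (F_hasDeriv hx.1).differentiableAt.differentiableWithinAt
      · rw [interior_Ioc]
        intro x hx
        rw [(F_hasDeriv hx.1).deriv]
        have := G_nonpos hx.1 (le_of_lt hx.2)
        linarith
    have := hanti (Set.mem_Ioc.2 ⟨ht, le_of_lt h1⟩) (Set.mem_Ioc.2 ⟨one_pos, le_rfl⟩) (le_of_lt h1)
    rw [hF1] at this; exact this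

/-- Key scalar inequality behind Pinsker. -/
private lemma key_t {t : ℝ} (ht : 0 ≤ t) :
    3 * (t - 1)^2 / (2 * (t + 2)) ≤ t * Real.log t - t + 1 := by
  rcases eq_or_lt_of_le ht with h | h
  · simp [← h]; norm_num
  · have h2 : (0:ℝ) < 2 * (t + 2) := by linarith
    rw [div_le_iff₀ h2]
    have := F_nonneg h
    nlinarith [this]

private lemma pointwise_kl {p q : ℝ} (hp : 0 ≤ p) (hq : 0 ≤ q) (habs : 0 < p → 0 < q) :
    3 * (p - q)^2 / (2 * (p + 2*q)) ≤ p * Real.log (p/q) - p + q := by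
  rcases eq_or_lt_of_le hq with hq0 | hq0
  · have hp0 : p = 0 := by
      by_contra h
      exact absurd (habs (lt_of_le_of_ne hp (Ne.symm h))) (by rw [← hq0]; exact lt_irrefl 0)
    simp [hp0, ← hq0]
  · have ht : 0 ≤ p / q := div_nonneg hp (le_of_lt hq0)
    have hk := key_t ht
    have := mul_le_mul_of_nonneg_left hk (le_of_lt hq0)
    have hpq : (0:ℝ) < p + 2*q := by linarith
    have e1 : q * (3 * (p/q - 1)^2 / (2 * (p/q + 2))) = 3 * (p - q)^2 / (2 * (p + 2*q)) := by
      rw [eq_div_iff (by positivity : (2:ℝ) * (p + 2*q) ≠ 0)]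
      field_simp
    have e2 : q * (p/q * Real.log (p/q) - p/q + 1) = p * Real.log (p/q) - p + q := by
      field_simp
    rw [e1, e2] at this
    exact this

private lemma sum_f_le_klF {X : Type*} [Fintype X] {p q : X → ℝ}
    (hp : IsPMF p) (hq : IsPMF q) (habs : ∀ x, 0 < p x → 0 < q x) :
    ∑ x, 3 * (p x - q x)^2 / (2 * (p x + 2 * q x)) ≤ klF p q := by
  have : klF p q = ∑ x, (p x * Real.log (p x / q x) - p x + q x) := by
    unfold klF
    rw [Finset.sum_add_distrib, Finset.sum_sub_distrib, hp.2, hq.2]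
    ring
  rw [this]
  exact Finset.sum_le_sum fun x _ => pointwise_kl (hp.1 x) (hq.1 x) (habs x)

private lemma klF_nonneg {X : Type*} [Fintype X] {p q : X → ℝ}
    (hp : IsPMF p) (hq : IsPMF q) (habs : ∀ x, 0 < p x → 0 < q x) :
    0 ≤ klF p q := by
  refine le_trans ?_ (sum_f_le_klF hp hq habs)
  apply Finset.sum_nonneg
  intro x _
  have := hp.1 x; have := hq.1 x
  positivity

private lemma pinsker {X : Type*} [Fintype X] {p q : X → ℝ}
    (hp : IsPMF p) (hq : IsPMF q) (habs : ∀ x, 0 < p x → 0 < q x) :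
    ∑ x, |p x - q x| ≤ Real.sqrt (2 * klF p q) := by
  have hcs := Finset.sum_sq_le_sum_mul_sum_of_sq_eq_mul Finset.univ
    (r := fun x => |p x - q x|)
    (f := fun x => 3 * (p x - q x)^2 / (2 * (p x + 2 * q x)))
    (g := fun x => 2 * (p x + 2 * q x) / 3)
    (fun x _ => by have := hp.1 x; have := hq.1 x; positivity)
    (fun x _ => by have := hp.1 x; have := hq.1 x; positivity)
    (fun x _ => by
      rcases eq_or_lt_of_le (add_nonneg (hp.1 x) (by linarith [hq.1 x] : (0:ℝ) ≤ 2 * q x)) with h | h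
      · have hpx : p x = 0 := by linarith [hp.1 x, hq.1 x, h.symm ▸ (le_refl (0:ℝ))]
        have hqx : q x = 0 := by nlinarith [hp.1 x, hq.1 x]
        simp [hpx, hqx]
      · have hne : (2:ℝ) * (p x + 2 * q x) ≠ 0 := by positivity
        rw [sq_abs]
        field_simp
        exact (mul_div_cancel_right₀ _ (ne_of_gt (by linarith))).symm)
  have hg : ∑ x, 2 * (p x + 2 * q x) / 3 = 2 := by
    rw [← Finset.sum_div, ← Finset.mul_sum (a := (2:ℝ))]
    rw [Finset.sum_add_distrib, hp.2, ← Finset.mul_sum (a := (2:ℝ)), hq.2]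
    norm_num
  rw [hg] at hcs
  have hf := sum_f_le_klF hp hq habs
  have h2 : (∑ x, |p x - q x|)^2 ≤ 2 * klF p q := by
    calc (∑ x, |p x - q x|)^2 ≤ (∑ x, 3 * (p x - q x)^2 / (2 * (p x + 2 * q x))) * 2 := hcs
    _ ≤ klF p q * 2 := by
        apply mul_le_mul_of_nonneg_right hf; norm_num
    _ = 2 * klF p q := by ring
  have hnn : 0 ≤ ∑ x, |p x - q x| := Finset.sum_nonneg fun x _ => abs_nonneg _
  have hkl : 0 ≤ klF p q := klF_nonneg hp hq habs
  exact (Real.le_sqrt hnn (by linarith)).2 h2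





private lemma value_bounds {S A : Type*} [Fintype S] [Fintype A] [Nonempty S] [Nonempty A]
    {P : S → A → S → ℝ} (hP : IsKernel P) {r : S → A → ℝ} {Rmax : ℝ}
    (hr : ∀ s a, 0 ≤ r s a ∧ r s a ≤ Rmax) {γ : ℝ} (hγ0 : 0 < γ) (hγ1 : γ < 1)
    {pol : S → A → ℝ} (hpol : IsPolicy pol) {V : S → ℝ} (hV : IsValue P pol r γ V) :
    ∀ s, 0 ≤ V s ∧ V s ≤ Rmax / (1 - γ) := by
  have h1γ : (0:ℝ) < 1 - γ := by linarith
  obtain ⟨s₀, _, hs₀⟩ := Finset.exists_max_image Finset.univ V Finset.univ_nonempty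
  obtain ⟨s₁, _, hs₁⟩ := Finset.exists_min_image Finset.univ V Finset.univ_nonempty
  have hmax : ∀ s, V s ≤ V s₀ := fun s => hs₀ s (Finset.mem_univ s)
  have hmin : ∀ s, V s₁ ≤ V s := fun s => hs₁ s (Finset.mem_univ s)
  have hub : V s₀ ≤ Rmax / (1 - γ) := by
    have step : V s₀ ≤ Rmax + γ * V s₀ := by
      calc V s₀ = ∑ a, pol s₀ a * (r s₀ a + γ * ∑ s', P s₀ a s' * V s') := hV s₀
      _ ≤ ∑ a, pol s₀ a * (Rmax + γ * V s₀) := by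
          apply Finset.sum_le_sum
          intro a _
          apply mul_le_mul_of_nonneg_left _ ((hpol s₀).1 a)
          have hPV : ∑ s', P s₀ a s' * V s' ≤ V s₀ := by
            calc ∑ s', P s₀ a s' * V s' ≤ ∑ s', P s₀ a s' * V s₀ :=
              Finset.sum_le_sum fun s' _ =>
                mul_le_mul_of_nonneg_left (hmax s') ((hP s₀ a).1 s')
            _ = V s₀ := by rw [← Finset.sum_mul, (hP s₀ a).2, one_mul]
          have := (hr s₀ a).2
          nlinarith [hγ0]
      _ = Rmax + γ * V s₀ := by rw [← Finset.sum_mul, (hpol s₀).2, one_mul]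
    rw [le_div_iff₀ h1γ]
    nlinarith
  have hlb : 0 ≤ V s₁ := by
    have step : γ * V s₁ ≤ V s₁ := by
      calc γ * V s₁ = ∑ a, pol s₁ a * (γ * V s₁) := by
            rw [← Finset.sum_mul, (hpol s₁).2, one_mul]
      _ ≤ ∑ a, pol s₁ a * (r s₁ a + γ * ∑ s', P s₁ a s' * V s') := by
          apply Finset.sum_le_sum
          intro a _
          apply mul_le_mul_of_nonneg_left _ ((hpol s₁).1 a)
          have hPV : V s₁ ≤ ∑ s', P s₁ a s' * V s' := by
            calc V s₁ = ∑ s', P s₁ a s' * V s₁ := by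
                  rw [← Finset.sum_mul, (hP s₁ a).2, one_mul]
            _ ≤ ∑ s', P s₁ a s' * V s' :=
              Finset.sum_le_sum fun s' _ =>
                mul_le_mul_of_nonneg_left (hmin s') ((hP s₁ a).1 s')
          have := (hr s₁ a).1
          nlinarith [hγ0]
      _ = V s₁ := (hV s₁).symm
    nlinarith
  exact fun s => ⟨le_trans hlb (hmin s), le_trans (hmax s) hub⟩

section Occ
variable {S A : Type*} [Fintype S] [Fintype A]

private lemma occ_facts {P : S → A → S → ℝ} (hP : IsKernel P) {pol : S → A → ℝ}
    (hpol : IsPolicy pol) {ρ₀ : S → ℝ} (hρ : IsPMF ρ₀) {γ : ℝ} (hγ0 : 0 < γ) (hγ1 : γ < 1)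
    {dpol : S → A → ℝ} (hd : IsOcc P pol ρ₀ γ dpol) :
    (∀ s a, 0 ≤ dpol s a) ∧ (1 - γ) * ∑ x : S × A, dpol x.1 x.2 = 1 := by
  set D : S → ℝ := fun s => ρ₀ s + γ * ∑ x : S × A, dpol x.1 x.2 * P x.1 x.2 s with hD
  have hdD : ∀ s a, dpol s a = pol s a * D s := fun s a => hd s a
  set N : S → ℝ := fun s => max (-(D s)) 0 with hN
  have hNnn : ∀ s, 0 ≤ N s := fun s => le_max_right _ _
  have hstep : ∀ s, N s ≤ γ * ∑ x : S × A, pol x.1 x.2 * N x.1 * P x.1 x.2 s := by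
    intro s
    have hrhs : 0 ≤ γ * ∑ x : S × A, pol x.1 x.2 * N x.1 * P x.1 x.2 s := by
      apply mul_nonneg (le_of_lt hγ0)
      apply Finset.sum_nonneg
      intro x _
      exact mul_nonneg (mul_nonneg ((hpol x.1).1 x.2) (hNnn x.1)) ((hP x.1 x.2).1 s)
    apply max_le _ hrhs
    have : -(D s) = -ρ₀ s - γ * ∑ x : S × A, dpol x.1 x.2 * P x.1 x.2 s := by
      rw [hD]; ring
    rw [this]
    have hsum : -(∑ x : S × A, dpol x.1 x.2 * P x.1 x.2 s) ≤
        ∑ x : S × A, pol x.1 x.2 * N x.1 * P x.1 x.2 s := by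
      rw [← Finset.sum_neg_distrib]
      apply Finset.sum_le_sum
      intro x _
      rw [hdD x.1 x.2]
      have h1 : -(D x.1) ≤ N x.1 := le_max_left _ _
      have h2 : 0 ≤ pol x.1 x.2 := (hpol x.1).1 x.2
      have h3 : 0 ≤ P x.1 x.2 s := (hP x.1 x.2).1 s
      have h4 := mul_le_mul_of_nonneg_right (mul_le_mul_of_nonneg_left h1 h2) h3
      have h5 : pol x.1 x.2 * -(D x.1) * P x.1 x.2 s =
          -(pol x.1 x.2 * D x.1 * P x.1 x.2 s) := by ring
      linarith
    have hργ : 0 ≤ ρ₀ s := hρ.1 s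
    nlinarith
  have hbig : ∑ s, N s ≤ γ * ∑ s, N s := by
    calc ∑ s, N s ≤ ∑ s, γ * ∑ x : S × A, pol x.1 x.2 * N x.1 * P x.1 x.2 s :=
      Finset.sum_le_sum fun s _ => hstep s
    _ = γ * ∑ x : S × A, pol x.1 x.2 * N x.1 * ∑ s, P x.1 x.2 s := by
        rw [← Finset.mul_sum, Finset.sum_comm]
        congr 1
        apply Finset.sum_congr rfl
        intro x _
        rw [Finset.mul_sum]
    _ = γ * ∑ x : S × A, pol x.1 x.2 * N x.1 := by
        congr 1
        exact Finset.sum_congr rfl fun x _ => by rw [(hP x.1 x.2).2, mul_one]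
    _ = γ * ∑ s, N s := by
        congr 1
        rw [Fintype.sum_prod_type]
        apply Finset.sum_congr rfl
        intro s _
        show ∑ a, pol s a * N s = N s
        rw [← Finset.sum_mul, (hpol s).2, one_mul]
  have hNsum0 : ∑ s, N s = 0 := by
    have h0 : 0 ≤ ∑ s, N s := Finset.sum_nonneg fun s _ => hNnn s
    nlinarith
  have hD0 : ∀ s, 0 ≤ D s := by
    intro s
    have := (Finset.sum_eq_zero_iff_of_nonneg (fun s _ => hNnn s)).1 hNsum0 s (Finset.mem_univ s)
    have : max (-(D s)) 0 = 0 := this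
    by_contra h
    push_neg at h
    have : -(D s) ≤ 0 := by
      rw [← this]; exact le_max_left _ _
    linarith
  constructor
  · intro s a
    rw [hdD s a]
    exact mul_nonneg ((hpol s).1 a) (hD0 s)
  · have hmass : ∑ x : S × A, dpol x.1 x.2 = 1 + γ * ∑ x : S × A, dpol x.1 x.2 := by
      calc ∑ x : S × A, dpol x.1 x.2 = ∑ s, ∑ a, pol s a * D s := by
            rw [Fintype.sum_prod_type]
            exact Finset.sum_congr rfl fun s _ => Finset.sum_congr rfl fun a _ => hdD s a
      _ = ∑ s, D s := by
          apply Finset.sum_congr rfl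
          intro s _
          rw [← Finset.sum_mul, (hpol s).2, one_mul]
      _ = ∑ s, ρ₀ s + γ * ∑ s, ∑ x : S × A, dpol x.1 x.2 * P x.1 x.2 s := by
          rw [hD, Finset.sum_add_distrib, ← Finset.mul_sum]
      _ = 1 + γ * ∑ x : S × A, dpol x.1 x.2 := by
          rw [hρ.2, Finset.sum_comm]
          congr 2
          apply Finset.sum_congr rfl
          intro x _
          rw [← Finset.mul_sum, (hP x.1 x.2).2, mul_one]
    linarith

end Occ

private lemma simulation {S A : Type*} [Fintype S] [Fintype A]
    {P Phat : S → A → S → ℝ} {pol : S → A → ℝ} {ρ₀ : S → ℝ} {γ : ℝ}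
    {r : S → A → ℝ} {V Vhat : S → ℝ} {dpol : S → A → ℝ}
    (hV : IsValue P pol r γ V) (hVhat : IsValue Phat pol r γ Vhat)
    (hd : IsOcc P pol ρ₀ γ dpol) :
    (∑ s, ρ₀ s * V s) - ∑ s, ρ₀ s * Vhat s =
      ∑ x : S × A, dpol x.1 x.2 *
        (γ * ((∑ s', P x.1 x.2 s' * Vhat s') - ∑ s', Phat x.1 x.2 s' * Vhat s')) := by
  set f : S → ℝ := fun s => V s - Vhat s with hfdef
  set E : S → A → ℝ := fun s a =>
    γ * ((∑ s', P s a s' * Vhat s') - ∑ s', Phat s a s' * Vhat s') with hE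
  set W : S → ℝ := fun s => ∑ a, pol s a * ∑ s', P s a s' * f s' with hW
  set T : S → ℝ := fun s => ∑ x : S × A, dpol x.1 x.2 * P x.1 x.2 s with hT
  set D : S → ℝ := fun s => ρ₀ s + γ * T s with hD
  have hdD : ∀ s a, dpol s a = pol s a * D s := fun s a => hd s a
  have hPf : ∀ s a, ∑ s', P s a s' * f s' =
      (∑ s', P s a s' * V s') - ∑ s', P s a s' * Vhat s' := by
    intro s a
    rw [← Finset.sum_sub_distrib]
    exact Finset.sum_congr rfl fun s' _ => by simp [hfdef]; ring
  have hf : ∀ s, f s = (∑ a, pol s a * E s a) + γ * W s := by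
    intro s
    have : f s = ∑ a, (pol s a * (r s a + γ * ∑ s', P s a s' * V s')
        - pol s a * (r s a + γ * ∑ s', Phat s a s' * Vhat s')) := by
      rw [Finset.sum_sub_distrib, ← hV s, ← hVhat s]
    rw [this, hW, Finset.mul_sum, ← Finset.sum_add_distrib]
    apply Finset.sum_congr rfl
    intro a _
    rw [hPf s a, hE]
    ring
  -- step (2): ∑ a, pol s a * E s a = f s - γ * W s
  have h2 : ∀ s, ∑ a, pol s a * E s a = f s - γ * W s := fun s => by rw [hf s]; ring
  -- step (1)
  have h1 : ∑ x : S × A, dpol x.1 x.2 * E x.1 x.2 = ∑ s, D s * (f s - γ * W s) := by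
    rw [Fintype.sum_prod_type]
    apply Finset.sum_congr rfl
    intro s _
    rw [← h2 s, Finset.mul_sum]
    apply Finset.sum_congr rfl
    intro a _
    rw [hdD s a]
    ring
  -- step (4): ∑ s, T s * f s = ∑ s, D s * W s
  have h4 : ∑ s, T s * f s = ∑ s, D s * W s := by
    have lhs : ∑ s, T s * f s = ∑ x : S × A, dpol x.1 x.2 * ∑ s', P x.1 x.2 s' * f s' := by
      calc ∑ s, T s * f s = ∑ s, ∑ x : S × A, dpol x.1 x.2 * P x.1 x.2 s * f s := by
            apply Finset.sum_congr rfl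
            intro s _
            rw [hT, Finset.sum_mul]
      _ = ∑ x : S × A, ∑ s, dpol x.1 x.2 * P x.1 x.2 s * f s := Finset.sum_comm
      _ = ∑ x : S × A, dpol x.1 x.2 * ∑ s', P x.1 x.2 s' * f s' := by
            apply Finset.sum_congr rfl
            intro x _
            rw [Finset.mul_sum]
            exact Finset.sum_congr rfl fun s _ => by ring
    have rhs : ∑ x : S × A, dpol x.1 x.2 * ∑ s', P x.1 x.2 s' * f s' = ∑ s, D s * W s := by
      rw [Fintype.sum_prod_type]
      apply Finset.sum_congr rfl
      intro s _
      show ∑ a, dpol s a * ∑ s', P s a s' * f s' = D s * W s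
      rw [hW, Finset.mul_sum]
      apply Finset.sum_congr rfl
      intro a _
      rw [hdD s a]
      ring
    rw [lhs, rhs]
  -- step (3)
  have h3 : ∑ s, D s * f s = (∑ s, ρ₀ s * f s) + γ * ∑ s, T s * f s := by
    rw [Finset.mul_sum, ← Finset.sum_add_distrib]
    apply Finset.sum_congr rfl
    intro s _
    rw [hD]
    ring
  have h5 : ∑ s, D s * (f s - γ * W s) = (∑ s, D s * f s) - γ * ∑ s, D s * W s := by
    rw [Finset.mul_sum, ← Finset.sum_sub_distrib]
    exact Finset.sum_congr rfl fun s _ => by ring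
  have h0 : (∑ s, ρ₀ s * V s) - ∑ s, ρ₀ s * Vhat s = ∑ s, ρ₀ s * f s := by
    rw [← Finset.sum_sub_distrib]
    exact Finset.sum_congr rfl fun s _ => by simp [hfdef]; ring
  calc (∑ s, ρ₀ s * V s) - ∑ s, ρ₀ s * Vhat s = ∑ s, ρ₀ s * f s := h0
  _ = ∑ x : S × A, dpol x.1 x.2 * E x.1 x.2 := by rw [h1, h5, h3, h4]; ring

/-- **Value gap via occupancy-weighted KL.** Under absolute continuity, the policy value
gap is bounded via the normalized-occupancy-weighted KL divergence. -/
theorem value_gap_via_kl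
    {S A : Type*} [Fintype S] [Fintype A] [Nonempty S] [Nonempty A]
    (P Phat : S → A → S → ℝ) (hP : IsKernel P) (hPhat : IsKernel Phat)
    (r : S → A → ℝ) (Rmax : ℝ) (hr : ∀ s a, 0 ≤ r s a ∧ r s a ≤ Rmax)
    (γ : ℝ) (hγ0 : 0 < γ) (hγ1 : γ < 1)
    (ρ₀ : S → ℝ) (hρ : IsPMF ρ₀)
    (habs : ∀ s a s', 0 < P s a s' → 0 < Phat s a s')
    (pol : S → A → ℝ) (hpol : IsPolicy pol)
    (V Vhat : S → ℝ) (hV : IsValue P pol r γ V) (hVhat : IsValue Phat pol r γ Vhat)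
    (dpol : S → A → ℝ) (hd : IsOcc P pol ρ₀ γ dpol) :
    |(∑ s, ρ₀ s * V s) - ∑ s, ρ₀ s * Vhat s| ≤
      γ * Rmax / (1 - γ) ^ 2 *
        Real.sqrt ((1 / 2) *
          ∑ x : S × A, (1 - γ) * dpol x.1 x.2 * klF (P x.1 x.2) (Phat x.1 x.2)) := by
  have h1γ : (0:ℝ) < 1 - γ := by linarith
  obtain ⟨hdnn, hdmass⟩ := occ_facts hP hpol hρ hγ0 hγ1 hd
  have hVb := value_bounds hPhat hr hγ0 hγ1 hpol hVhat
  have hRmax : 0 ≤ Rmax :=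
    le_trans (hr (Classical.arbitrary S) (Classical.arbitrary A)).1
      (hr (Classical.arbitrary S) (Classical.arbitrary A)).2
  set C : ℝ := Rmax / (2 * (1 - γ)) with hC
  have hCnn : 0 ≤ C := by positivity
  set K : S × A → ℝ := fun x => klF (P x.1 x.2) (Phat x.1 x.2) with hK
  have hKnn : ∀ x : S × A, 0 ≤ K x := fun x =>
    klF_nonneg (hP x.1 x.2) (hPhat x.1 x.2) (habs x.1 x.2)
  set M : ℝ := ∑ x : S × A, (1 - γ) * dpol x.1 x.2 * K x with hM
  -- per-(s,a) model error bound
  have hDelta : ∀ s a, |(∑ s', P s a s' * Vhat s') - ∑ s', Phat s a s' * Vhat s'| ≤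
      C * Real.sqrt (2 * K (s, a)) := by
    intro s a
    have hcenter : (∑ s', P s a s' * Vhat s') - ∑ s', Phat s a s' * Vhat s' =
        ∑ s', (P s a s' - Phat s a s') * (Vhat s' - C) := by
      have : ∑ s', (P s a s' - Phat s a s') * (Vhat s' - C) =
          ((∑ s', P s a s' * Vhat s') - ∑ s', Phat s a s' * Vhat s')
            - C * ((∑ s', P s a s') - ∑ s', Phat s a s') := by
        rw [← Finset.sum_sub_distrib, ← Finset.sum_sub_distrib, Finset.mul_sum,
          ← Finset.sum_sub_distrib]
        exact Finset.sum_congr rfl fun s' _ => by ring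
      rw [this, (hP s a).2, (hPhat s a).2]
      ring
    rw [hcenter]
    calc |∑ s', (P s a s' - Phat s a s') * (Vhat s' - C)|
        ≤ ∑ s', |(P s a s' - Phat s a s') * (Vhat s' - C)| :=
          Finset.abs_sum_le_sum_abs _ _
      _ ≤ ∑ s', |P s a s' - Phat s a s'| * C := by
          apply Finset.sum_le_sum
          intro s' _
          rw [abs_mul]
          apply mul_le_mul_of_nonneg_left _ (abs_nonneg _)
          rw [abs_le]
          have h1 := (hVb s').1
          have h2 := (hVb s').2
          have : Rmax / (1 - γ) = 2 * C := by rw [hC]; field_simp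
          constructor <;> [linarith; linarith [this ▸ h2]]
      _ = C * ∑ s', |P s a s' - Phat s a s'| := by rw [← Finset.sum_mul]; ring
      _ ≤ C * Real.sqrt (2 * K (s, a)) := by
          apply mul_le_mul_of_nonneg_left _ hCnn
          exact pinsker (hP s a) (hPhat s a) (habs s a)
  -- Cauchy-Schwarz over state-action pairs
  have hdsum : ∑ x : S × A, dpol x.1 x.2 = 1 / (1 - γ) := by
    field_simp
    linarith [hdmass]
  have hcs : (∑ x : S × A, dpol x.1 x.2 * Real.sqrt (2 * K x)) ^ 2 ≤
      (1 / (1 - γ)) * (2 * M / (1 - γ)) := by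
    have := Finset.sum_sq_le_sum_mul_sum_of_sq_eq_mul Finset.univ
      (r := fun x : S × A => dpol x.1 x.2 * Real.sqrt (2 * K x))
      (f := fun x : S × A => dpol x.1 x.2)
      (g := fun x : S × A => dpol x.1 x.2 * (2 * K x))
      (fun x _ => hdnn x.1 x.2)
      (fun x _ => mul_nonneg (hdnn x.1 x.2) (by linarith [hKnn x]))
      (fun x _ => by
        rw [mul_pow, Real.sq_sqrt (by linarith [hKnn x] : (0:ℝ) ≤ 2 * K x)]
        ring)
    rw [hdsum] at this
    have hg : ∑ x : S × A, dpol x.1 x.2 * (2 * K x) = 2 * M / (1 - γ) := by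
      rw [hM, eq_div_iff h1γ.ne', Finset.sum_mul, Finset.mul_sum]
      exact Finset.sum_congr rfl fun x _ => by ring
    rw [hg] at this
    exact this
  have hrnn : 0 ≤ ∑ x : S × A, dpol x.1 x.2 * Real.sqrt (2 * K x) :=
    Finset.sum_nonneg fun x _ => mul_nonneg (hdnn x.1 x.2) (Real.sqrt_nonneg _)
  have hMnn : 0 ≤ M :=
    Finset.sum_nonneg fun x _ =>
      mul_nonneg (mul_nonneg h1γ.le (hdnn x.1 x.2)) (hKnn x)
  have hB : ∑ x : S × A, dpol x.1 x.2 * Real.sqrt (2 * K x) ≤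
      Real.sqrt (2 * M) / (1 - γ) := by
    have h2M : (1 / (1 - γ)) * (2 * M / (1 - γ)) = (2 * M) / (1 - γ)^2 := by
      rw [div_mul_div_comm, one_mul, ← sq]
    rw [h2M] at hcs
    have := (Real.le_sqrt hrnn (div_nonneg (by linarith) (by positivity))).2 hcs
    rwa [Real.sqrt_div (by linarith : (0:ℝ) ≤ 2 * M), Real.sqrt_sq h1γ.le] at this
  -- assemble
  rw [simulation hV hVhat hd]
  calc |∑ x : S × A, dpol x.1 x.2 *
        (γ * ((∑ s', P x.1 x.2 s' * Vhat s') - ∑ s', Phat x.1 x.2 s' * Vhat s'))|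
      ≤ ∑ x : S × A, |dpol x.1 x.2 *
        (γ * ((∑ s', P x.1 x.2 s' * Vhat s') - ∑ s', Phat x.1 x.2 s' * Vhat s'))| :=
        Finset.abs_sum_le_sum_abs _ _
    _ ≤ ∑ x : S × A, dpol x.1 x.2 * (γ * (C * Real.sqrt (2 * K x))) := by
        apply Finset.sum_le_sum
        intro x _
        rw [abs_mul, abs_mul, abs_of_nonneg (hdnn x.1 x.2), abs_of_nonneg hγ0.le]
        apply mul_le_mul_of_nonneg_left _ (hdnn x.1 x.2)
        exact mul_le_mul_of_nonneg_left (hDelta x.1 x.2) hγ0.le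
    _ = γ * C * ∑ x : S × A, dpol x.1 x.2 * Real.sqrt (2 * K x) := by
        rw [Finset.mul_sum]
        exact Finset.sum_congr rfl fun x _ => by ring
    _ ≤ γ * C * (Real.sqrt (2 * M) / (1 - γ)) :=
        mul_le_mul_of_nonneg_left hB (by positivity)
    _ = γ * Rmax / (1 - γ) ^ 2 * Real.sqrt ((1/2) * M) := by
        have hsq : Real.sqrt (2 * M) = 2 * Real.sqrt ((1/2) * M) := by
          rw [show 2 * M = 4 * ((1/2) * M) by ring,
            Real.sqrt_mul (by norm_num : (0:ℝ) ≤ 4),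
            show Real.sqrt 4 = 2 by
              rw [show (4:ℝ) = 2^2 by norm_num, Real.sqrt_sq (by norm_num : (0:ℝ) ≤ 2)]]
        rw [hsq, hC]
        field_simp
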